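/- For every integer n ≥ 1, the following identity holds in the polynomial ring ℤ[u, v]: ( ∑_{(l,r,s) ∈ ℕ³ with l + r + s = n − 1} u^r · v^s · (1 + (uv)^l − δ_{l,0}) ) · (1 − u)(1 − v) = (1 − u^n)(1 − v^n), where δ_{l,0} = 1 if l = 0 and δ_{l,0} = 0 otherwise. -/
import Mathlib


/-!
Statement 2: the refined summation identity (from the proof of Theorem 2.1 of the paper)
`( ∑_{l+r+s = n−1} u^r v^s (1 + (uv)^l − δ_{l,0}) ) (1−u)(1−v) = (1−u^n)(1−v^n)`
in `ℤ[u, v]`, modelled as `MvPolynomial (Fin 2) ℤ` with `u = X 0`, `v = X 1`.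
Since every solution of `l + r + s = n − 1` in natural numbers satisfies `l, r, s < n`,
the sum is taken over triples in `{0, …, n−1}³` with `l + r + s = n − 1`.
-/

open MvPolynomial

noncomputable section

private lemma sub_X_ne : (X 0 : MvPolynomial (Fin 2) ℤ) - X 1 ≠ 0 := by
  intro h
  have h2 : (X 0 : MvPolynomial (Fin 2) ℤ) = X 1 := sub_eq_zero.mp h
  have := MvPolynomial.X_injective (R := ℤ) h2
  simp at this

/-- reindexing the filtered triple sum as a double sum -/
private lemma reindex (n : ℕ) (f : ℕ → ℕ → ℕ → MvPolynomial (Fin 2) ℤ) (hn : 1 ≤ n) :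
    ∑ t ∈ (Finset.range n ×ˢ Finset.range n ×ˢ Finset.range n).filter
        (fun t => t.1 + t.2.1 + t.2.2 = n - 1), f t.1 t.2.1 t.2.2
    = ∑ l ∈ Finset.range n, ∑ r ∈ Finset.range (n - l), f l r (n - 1 - l - r) := by
  rw [Finset.sum_sigma' (Finset.range n) (fun l => Finset.range (n - l))]
  refine Finset.sum_nbij' (fun t => ⟨t.1, t.2.1⟩) (fun p => (p.1, p.2, n - 1 - p.1 - p.2))
    ?_ ?_ ?_ ?_ ?_
  · intro a ha
    simp only [Finset.mem_filter, Finset.mem_product, Finset.mem_range] at ha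
    simp only [Finset.mem_sigma, Finset.mem_range]
    omega
  · intro a ha
    simp only [Finset.mem_sigma, Finset.mem_range] at ha
    simp only [Finset.mem_filter, Finset.mem_product, Finset.mem_range]
    omega
  · intro a ha
    simp only [Finset.mem_filter, Finset.mem_product, Finset.mem_range] at ha
    have : n - 1 - a.1 - a.2.1 = a.2.2 := by omega
    simp [this]
  · intro a ha
    rfl
  · intro a ha
    simp only [Finset.mem_filter, Finset.mem_product, Finset.mem_range] at ha
    have : n - 1 - a.1 - a.2.1 = a.2.2 := by omega
    simp [this]

theorem stmt2 (n : ℕ) (hn : 1 ≤ n) :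
    (∑ t ∈ (Finset.range n ×ˢ Finset.range n ×ˢ Finset.range n).filter
        (fun t => t.1 + t.2.1 + t.2.2 = n - 1),
        (X 0 : MvPolynomial (Fin 2) ℤ) ^ t.2.1 * (X 1 : MvPolynomial (Fin 2) ℤ) ^ t.2.2 *
          (1 + ((X 0 : MvPolynomial (Fin 2) ℤ) * X 1) ^ t.1 -
            if t.1 = 0 then 1 else 0)) *
      ((1 - (X 0 : MvPolynomial (Fin 2) ℤ)) * (1 - (X 1 : MvPolynomial (Fin 2) ℤ))) =
    (1 - (X 0 : MvPolynomial (Fin 2) ℤ) ^ n) * (1 - (X 1 : MvPolynomial (Fin 2) ℤ) ^ n) := by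
  set u : MvPolynomial (Fin 2) ℤ := X 0 with hu
  set v : MvPolynomial (Fin 2) ℤ := X 1 with hv
  apply mul_right_cancel₀ sub_X_ne
  rw [← hu, ← hv]
  set S : MvPolynomial (Fin 2) ℤ :=
    ∑ t ∈ (Finset.range n ×ˢ Finset.range n ×ˢ Finset.range n).filter
        (fun t => t.1 + t.2.1 + t.2.2 = n - 1),
        u ^ t.2.1 * v ^ t.2.2 * (1 + (u * v) ^ t.1 - if t.1 = 0 then 1 else 0) with hSdef
  -- Step 1: S * (u - v) = ∑_{l<n} c_l (u^{n-l} - v^{n-l})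
  have hS : S * (u - v) = ∑ l ∈ Finset.range n,
      (1 + (u * v) ^ l - if l = 0 then 1 else 0) * (u ^ (n - l) - v ^ (n - l)) := by
    rw [hSdef,
      reindex n (fun l r s => u ^ r * v ^ s * (1 + (u * v) ^ l - if l = 0 then 1 else 0)) hn,
      Finset.sum_mul]
    refine Finset.sum_congr rfl fun l hl => ?_
    rw [Finset.mem_range] at hl
    rw [Finset.sum_mul]
    have key : ∑ r ∈ Finset.range (n - l),
        (u ^ r * v ^ (n - 1 - l - r) * (1 + (u * v) ^ l - if l = 0 then 1 else 0)) * (u - v)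
        = ((∑ r ∈ Finset.range (n - l), u ^ r * v ^ ((n - l) - 1 - r)) * (u - v)) *
          (1 + (u * v) ^ l - if l = 0 then 1 else 0) := by
      rw [Finset.sum_mul, Finset.sum_mul]
      refine Finset.sum_congr rfl fun r hr => ?_
      have : n - 1 - l - r = n - l - 1 - r := by omega
      rw [this]; ring
    rw [key, geom_sum₂_mul]
    ring
  -- Step 2: rewrite each term of the sum
  have hT : ∑ l ∈ Finset.range n,
      (1 + (u * v) ^ l - if l = 0 then 1 else 0) * (u ^ (n - l) - v ^ (n - l))
      = ∑ l ∈ Finset.range n, ((u ^ (n - l) - v ^ (n - l)) + (u ^ n * v ^ l - u ^ l * v ^ n)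
          - if l = 0 then u ^ n - v ^ n else 0) := by
    refine Finset.sum_congr rfl fun l hl => ?_
    rw [Finset.mem_range] at hl
    have e1 : u ^ l * u ^ (n - l) = u ^ n := by rw [← pow_add]; congr 1; omega
    have e2 : v ^ l * v ^ (n - l) = v ^ n := by rw [← pow_add]; congr 1; omega
    by_cases h0 : l = 0
    · subst h0; simp
    · simp only [h0, if_false]
      rw [mul_pow]
      linear_combination v ^ l * e1 - u ^ l * e2
  have hsplit : ∑ l ∈ Finset.range n, ((u ^ (n - l) - v ^ (n - l)) + (u ^ n * v ^ l - u ^ l * v ^ n)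
          - if l = 0 then u ^ n - v ^ n else 0)
      = (∑ l ∈ Finset.range n, u ^ (n - l)) - (∑ l ∈ Finset.range n, v ^ (n - l))
        + u ^ n * (∑ l ∈ Finset.range n, v ^ l) - v ^ n * (∑ l ∈ Finset.range n, u ^ l)
        - (u ^ n - v ^ n) := by
    have c1 : ∑ l ∈ Finset.range n, u ^ l * v ^ n = v ^ n * ∑ l ∈ Finset.range n, u ^ l := by
      rw [Finset.mul_sum]; exact Finset.sum_congr rfl fun _ _ => mul_comm _ _
    have c2 : ∑ l ∈ Finset.range n, u ^ n * v ^ l = u ^ n * ∑ l ∈ Finset.range n, v ^ l := by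
      rw [Finset.mul_sum]
    rw [Finset.sum_sub_distrib, Finset.sum_add_distrib, Finset.sum_sub_distrib,
      Finset.sum_sub_distrib, Finset.sum_ite_eq' (Finset.range n) 0 (fun _ => u ^ n - v ^ n),
      if_pos (Finset.mem_range.mpr hn), c1, c2]
    ring
  -- Step 3: reflect the sums with exponent n - l
  have hrefl : ∀ x : MvPolynomial (Fin 2) ℤ,
      (∑ l ∈ Finset.range n, x ^ (n - l)) = x * ∑ l ∈ Finset.range n, x ^ l := by
    intro x
    calc (∑ l ∈ Finset.range n, x ^ (n - l)) = ∑ j ∈ Finset.range n, x ^ (j + 1) := by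
          rw [← Finset.sum_range_reflect (fun j => x ^ (j + 1)) n]
          refine Finset.sum_congr rfl fun l hl => ?_
          rw [Finset.mem_range] at hl
          congr 1
          omega
      _ = x * ∑ l ∈ Finset.range n, x ^ l := by
          rw [Finset.mul_sum]
          exact Finset.sum_congr rfl fun _ _ => by rw [pow_succ]; ring
  -- Step 4: geometric sums
  have hA := geom_sum_mul u n
  have hB := geom_sum_mul v n
  calc S * ((1 - u) * (1 - v)) * (u - v)
      = (S * (u - v)) * ((1 - u) * (1 - v)) := by ring
    _ = ((∑ l ∈ Finset.range n, u ^ l) * (u - v ^ n)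
          + (∑ l ∈ Finset.range n, v ^ l) * (u ^ n - v) - (u ^ n - v ^ n))
          * ((1 - u) * (1 - v)) := by
        rw [hS, hT, hsplit, hrefl u, hrefl v]; ring
    _ = (1 - u ^ n) * (1 - v ^ n) * (u - v) := by
        linear_combination (-(u - v ^ n) * (1 - v)) * hA + (-(u ^ n - v) * (1 - u)) * hB
end
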